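/- Let H be a separable Hilbert space and (B_i) a sequence of bounded operators on H such that the series ∑_i B_i* B_i converges strongly to a bounded operator T. If ρ is a positive trace-class operator on H, then the series ∑_i B_i ρ B_i* converges in trace norm and Tr(∑_i B_i ρ B_i*) = Tr(ρ T). -/

import Mathlib

set_option linter.unusedSectionVars false
set_option maxHeartbeats 1000000

section aux
variable {H : Type*} [NormedAddCommGroup H] [InnerProductSpace ℂ H] [CompleteSpace H]
  {ι : Type*} (e : HilbertBasis ι ℂ H)

local notation "⟪" x ", " y "⟫" => @inner ℂ _ _ x y

lemma aux_parseval (x : H) : HasSum (fun a => ‖(⟪e a, x⟫ : ℂ)‖ ^ 2) (‖x‖ ^ 2) := by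
  have h := (e.hasSum_inner_mul_inner x x).mapL Complex.reCLM
  have h1 : ∀ a, (((⟪x, e a⟫ : ℂ) * ⟪e a, x⟫)).re = ‖(⟪e a, x⟫ : ℂ)‖ ^ 2 := by
    intro a
    rw [← inner_conj_symm (e a) x, RCLike.mul_conj, RCLike.norm_conj]
    norm_cast
  have h2 : ((⟪x, x⟫ : ℂ)).re = ‖x‖ ^ 2 := by
    rw [inner_self_eq_norm_sq_to_K]; norm_cast
  simp only [Complex.reCLM_apply, h1, h2] at h; exact h

/-- Hilbert–Schmidt swap: the `ℓ²`-sum of `A` over a Hilbert basis equals that of its adjoint. -/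
lemma aux_swap (A : H →L[ℂ] H) :
    ∑' a, ENNReal.ofReal (‖A (e a)‖ ^ 2) =
      ∑' a, ENNReal.ofReal (‖(ContinuousLinearMap.adjoint A) (e a)‖ ^ 2) := by
  have key : ∀ (A : H →L[ℂ] H) (a : ι), ENNReal.ofReal (‖A (e a)‖ ^ 2) =
      ∑' b, ENNReal.ofReal (‖(⟪e b, A (e a)⟫ : ℂ)‖ ^ 2) := by
    intro A a
    rw [← ENNReal.ofReal_tsum_of_nonneg (fun b => by positivity)
      (aux_parseval e (A (e a))).summable, (aux_parseval e (A (e a))).tsum_eq]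
  calc ∑' a, ENNReal.ofReal (‖A (e a)‖ ^ 2)
      = ∑' a, ∑' b, ENNReal.ofReal (‖(⟪e b, A (e a)⟫ : ℂ)‖ ^ 2) := by
        exact tsum_congr fun a => key A a
    _ = ∑' b, ∑' a, ENNReal.ofReal (‖(⟪e b, A (e a)⟫ : ℂ)‖ ^ 2) := ENNReal.tsum_comm
    _ = ∑' b, ∑' a, ENNReal.ofReal (‖(⟪e a, (ContinuousLinearMap.adjoint A) (e b)⟫ : ℂ)‖ ^ 2) := by
        refine tsum_congr fun b => tsum_congr fun a => ?_
        rw [← ContinuousLinearMap.adjoint_inner_left, norm_inner_symm]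
    _ = ∑' b, ENNReal.ofReal (‖(ContinuousLinearMap.adjoint A) (e b)‖ ^ 2) := by
        exact tsum_congr fun b => (key _ b).symm

end aux

section aux2
set_option linter.unusedSectionVars false
variable {H : Type*} [NormedAddCommGroup H] [InnerProductSpace ℂ H] [CompleteSpace H]
  {ι : Type*} (e : HilbertBasis ι ℂ H)

local notation "⟪" x ", " y "⟫" => @inner ℂ _ _ x y

/-- Cyclicity of the trace for two Hilbert–Schmidt operators. -/
lemma aux_cyc (S R : H →L[ℂ] H)
    (hS : Summable fun a => ‖S (e a)‖ ^ 2) (hR : Summable fun a => ‖R (e a)‖ ^ 2) :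
    ∑' a, (⟪e a, S (R (e a))⟫ : ℂ) = ∑' a, (⟪e a, R (S (e a))⟫ : ℂ) := by
  set f : ι × ι → ℂ := fun p => ⟪e p.1, S (e p.2)⟫ * ⟪e p.2, R (e p.1)⟫ with hf
  -- summability of the two dominating square families
  have hg1' : Summable (fun q : ι × ι => ‖(⟪e q.2, S (e q.1)⟫ : ℂ)‖ ^ 2) := by
    rw [summable_prod_of_nonneg (fun q => by positivity)]
    refine ⟨fun b => (aux_parseval e (S (e b))).summable, ?_⟩
    have : ∀ b, ∑' a, ‖(⟪e a, S (e b)⟫ : ℂ)‖ ^ 2 = ‖S (e b)‖ ^ 2 :=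
      fun b => (aux_parseval e (S (e b))).tsum_eq
    exact hS.congr fun b => (this b).symm
  have hg1 : Summable (fun p : ι × ι => ‖(⟪e p.1, S (e p.2)⟫ : ℂ)‖ ^ 2) := by
    have := (Equiv.prodComm ι ι).summable_iff.mpr hg1'
    simpa [Function.comp_def] using this
  have hg2 : Summable (fun p : ι × ι => ‖(⟪e p.2, R (e p.1)⟫ : ℂ)‖ ^ 2) := by
    rw [summable_prod_of_nonneg (fun q => by positivity)]
    refine ⟨fun a => (aux_parseval e (R (e a))).summable, ?_⟩
    have : ∀ a, ∑' b, ‖(⟪e b, R (e a)⟫ : ℂ)‖ ^ 2 = ‖R (e a)‖ ^ 2 :=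
      fun a => (aux_parseval e (R (e a))).tsum_eq
    exact hR.congr fun a => (this a).symm
  have hfs : Summable f := by
    refine Summable.of_norm_bounded (((hg1.add hg2).div_const 2)) (fun p => ?_)
    have h1 : ‖f p‖ = ‖(⟪e p.1, S (e p.2)⟫ : ℂ)‖ * ‖(⟪e p.2, R (e p.1)⟫ : ℂ)‖ := norm_mul _ _
    rw [h1]
    nlinarith [sq_nonneg (‖(⟪e p.1, S (e p.2)⟫ : ℂ)‖ - ‖(⟪e p.2, R (e p.1)⟫ : ℂ)‖),
      norm_nonneg (⟪e p.1, S (e p.2)⟫ : ℂ), norm_nonneg (⟪e p.2, R (e p.1)⟫ : ℂ)]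
  obtain ⟨s, hsum⟩ := hfs
  -- rows
  have hrow : ∀ a, HasSum (fun b => f (a, b)) (⟪e a, S (R (e a))⟫ : ℂ) := by
    intro a
    have h := e.hasSum_inner_mul_inner ((ContinuousLinearMap.adjoint S) (e a)) (R (e a))
    have heq : (⟪(ContinuousLinearMap.adjoint S) (e a), R (e a)⟫ : ℂ) = ⟪e a, S (R (e a))⟫ :=
      ContinuousLinearMap.adjoint_inner_left S _ _
    rw [heq] at h
    convert h using 2 with b
    · rfl
    simp only [hf]
    rw [ContinuousLinearMap.adjoint_inner_left]
  -- columns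
  have hcol : ∀ b, HasSum (fun a => f (a, b)) (⟪e b, R (S (e b))⟫ : ℂ) := by
    intro b
    have h := e.hasSum_inner_mul_inner ((ContinuousLinearMap.adjoint R) (e b)) (S (e b))
    have heq : (⟪(ContinuousLinearMap.adjoint R) (e b), S (e b)⟫ : ℂ) = ⟪e b, R (S (e b))⟫ :=
      ContinuousLinearMap.adjoint_inner_left R _ _
    rw [heq] at h
    convert h using 2 with a
    · rfl
    simp only [hf]
    rw [ContinuousLinearMap.adjoint_inner_left, mul_comm]
  have h1 : HasSum (fun a => (⟪e a, S (R (e a))⟫ : ℂ)) s := hsum.prod_fiberwise hrow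
  have h2 : HasSum (fun b => (⟪e b, R (S (e b))⟫ : ℂ)) s := by
    have hsum' : HasSum (f ∘ (Equiv.prodComm ι ι)) s := (Equiv.prodComm ι ι).hasSum_iff.mpr hsum
    exact hsum'.prod_fiberwise fun b => by simpa [Function.comp] using hcol b
  rw [h1.tsum_eq, h2.tsum_eq]

end aux2

section aux3
variable {H : Type*} [NormedAddCommGroup H] [InnerProductSpace ℂ H] [CompleteSpace H]

local notation "⟪" x ", " y "⟫" => @inner ℂ _ _ x y

lemma aux_strong (B : ℕ → H →L[ℂ] H) (T : H →L[ℂ] H)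
    (hT : ∀ x : H, Filter.Tendsto
      (fun n => ∑ i ∈ Finset.range n, (ContinuousLinearMap.adjoint (B i)) ((B i) x))
      Filter.atTop (nhds (T x))) (x : H) :
    HasSum (fun i => ‖(B i) x‖ ^ 2) ((⟪x, T x⟫ : ℂ).re) ∧
      (⟪x, T x⟫ : ℂ) = (((⟪x, T x⟫ : ℂ).re : ℝ) : ℂ) := by
  set s : ℕ → ℝ := fun n => ∑ i ∈ Finset.range n, ‖(B i) x‖ ^ 2 with hs
  have htend : Filter.Tendsto (fun n => ((s n : ℝ) : ℂ)) Filter.atTop (nhds (⟪x, T x⟫ : ℂ)) := by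
    have h := Filter.Tendsto.inner (𝕜 := ℂ) (f := fun _ => x) tendsto_const_nhds (hT x)
    have heq : ∀ n, (⟪x, ∑ i ∈ Finset.range n, (ContinuousLinearMap.adjoint (B i)) ((B i) x)⟫ : ℂ)
        = ((s n : ℝ) : ℂ) := by
      intro n
      rw [inner_sum, hs]
      push_cast
      refine Finset.sum_congr rfl fun i _ => ?_
      rw [ContinuousLinearMap.adjoint_inner_right, inner_self_eq_norm_sq_to_K]
      norm_cast
    simpa [heq] using h
  have htre : Filter.Tendsto s Filter.atTop (nhds ((⟪x, T x⟫ : ℂ).re)) := by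
    have := (Complex.continuous_re.tendsto _).comp htend
    simpa [Function.comp_def] using this
  have hmono : Monotone s := by
    intro m n hmn
    exact Finset.sum_le_sum_of_subset_of_nonneg (Finset.range_subset_range.mpr hmn)
      (fun i _ _ => sq_nonneg _)
  have hsummable : Summable (fun i => ‖(B i) x‖ ^ 2) :=
    summable_of_sum_range_le (fun i => sq_nonneg _) (fun n => hmono.ge_of_tendsto htre n)
  have hts : ∑' i, ‖(B i) x‖ ^ 2 = (⟪x, T x⟫ : ℂ).re :=
    tendsto_nhds_unique hsummable.hasSum.tendsto_sum_nat htre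
  refine ⟨hts ▸ hsummable.hasSum, ?_⟩
  have h2 : Filter.Tendsto (fun n => ((s n : ℝ) : ℂ)) Filter.atTop
      (nhds (((⟪x, T x⟫ : ℂ).re : ℝ) : ℂ)) :=
    (Complex.continuous_ofReal.tendsto _).comp htre
  exact tendsto_nhds_unique htend h2

end aux3

section main
open ContinuousLinearMap

local notation "⟪" x ", " y "⟫" => @inner ℂ _ _ x y


/-- If `(B i)` is a sequence of bounded operators on a separable Hilbert space `H`
such that `∑ i, (B i)† (B i)` converges strongly to a bounded operator `T`, and `ρ` is a
positive trace-class operator on `H` (trace-class expressed via summability of the diagonal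
inner products along a Hilbert basis `e`), then the series `∑ i, B i ρ (B i)†` converges in
trace norm (for positive summands this is equivalent to summability of their traces) and
`Tr (∑ i, B i ρ (B i)†) = Tr (ρ T)`. -/
theorem stmt0
    {H : Type*} [NormedAddCommGroup H] [InnerProductSpace ℂ H]
    [CompleteSpace H] [TopologicalSpace.SeparableSpace H]
    {ι : Type*} (e : HilbertBasis ι ℂ H)
    (B : ℕ → H →L[ℂ] H) (T : H →L[ℂ] H)
    (hT : ∀ x : H, Filter.Tendsto
      (fun n => ∑ i ∈ Finset.range n, (ContinuousLinearMap.adjoint (B i)) ((B i) x))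
      Filter.atTop (nhds (T x)))
    (ρ : H →L[ℂ] H) (hρ : ρ.IsPositive)
    (hρtc : Summable (fun a => (inner ℂ (e a) (ρ (e a)) : ℂ))) :
    (∀ i, Summable (fun a =>
      (inner ℂ (e a) ((B i) (ρ ((ContinuousLinearMap.adjoint (B i)) (e a)))) : ℂ))) ∧
    Summable (fun i => ∑' a,
      (inner ℂ (e a) ((B i) (ρ ((ContinuousLinearMap.adjoint (B i)) (e a)))) : ℂ)) ∧
    ∑' i, ∑' a, (inner ℂ (e a) ((B i) (ρ ((ContinuousLinearMap.adjoint (B i)) (e a)))) : ℂ)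
      = ∑' a, (inner ℂ (e a) (ρ (T (e a))) : ℂ) := by
  classical
  have hρ0 : 0 ≤ ρ := (nonneg_iff_isPositive ρ).mpr hρ
  set C : H →L[ℂ] H := CFC.sqrt ρ with hCdef
  have hCpos : C.IsPositive := (nonneg_iff_isPositive _).mp (CFC.sqrt_nonneg ρ)
  have hCadj : ContinuousLinearMap.adjoint C = C := by
    rw [← ContinuousLinearMap.star_eq_adjoint]; exact hCpos.isSelfAdjoint
  have hCC : ∀ y, C (C y) = ρ y := by
    intro y
    have h : C * C = ρ := CFC.sqrt_mul_sqrt_self ρ hρ0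
    calc C (C y) = (C * C) y := rfl
      _ = ρ y := by rw [h]
  have hρinner : ∀ x y : H, (⟪x, ρ y⟫ : ℂ) = ⟪C x, C y⟫ := by
    intro x y
    rw [← hCC y, ← ContinuousLinearMap.adjoint_inner_left, hCadj]
  have hCswap : ∀ (x z : H), (⟪C x, z⟫ : ℂ) = ⟪x, C z⟫ := by
    intro x z
    rw [← ContinuousLinearMap.adjoint_inner_left, hCadj]
  -- the pointwise diagonal entries
  set u : ℕ → ι → ℝ := fun i a => ‖C ((ContinuousLinearMap.adjoint (B i)) (e a))‖ ^ 2 with hu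
  have hgeq : ∀ i a, (⟪e a, (B i) (ρ ((ContinuousLinearMap.adjoint (B i)) (e a)))⟫ : ℂ)
      = ((u i a : ℝ) : ℂ) := by
    intro i a
    rw [← ContinuousLinearMap.adjoint_inner_left (B i), hρinner, inner_self_eq_norm_sq_to_K]
    norm_cast
  -- strong limit facts
  have hstr := aux_strong B T hT
  set W : ι → ℝ := fun b => (⟪C (e b), T (C (e b))⟫ : ℂ).re with hWdef
  have hW : ∀ b, HasSum (fun i => ‖(B i) (C (e b))‖ ^ 2) (W b) := fun b => (hstr (C (e b))).1
  have hW0 : ∀ b, 0 ≤ W b := fun b => (hW b).nonneg fun i => sq_nonneg _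
  have hCsq : Summable (fun b => ‖C (e b)‖ ^ 2) := by
    have h := (hρtc.hasSum.mapL Complex.reCLM).summable
    refine h.congr fun b => ?_
    have : (⟪e b, ρ (e b)⟫ : ℂ) = ((‖C (e b)‖ ^ 2 : ℝ) : ℂ) := by
      rw [hρinner, inner_self_eq_norm_sq_to_K]; norm_cast
    simp only [Complex.reCLM_apply]
    rw [this]
    norm_cast
  have hWsum : Summable W := by
    refine Summable.of_nonneg_of_le hW0 (fun b => ?_) (hCsq.mul_left ‖T‖)
    calc W b ≤ ‖(⟪C (e b), T (C (e b))⟫ : ℂ)‖ := Complex.re_le_norm _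
      _ ≤ ‖C (e b)‖ * ‖T (C (e b))‖ := norm_inner_le_norm _ _
      _ ≤ ‖C (e b)‖ * (‖T‖ * ‖C (e b)‖) := by
          exact mul_le_mul_of_nonneg_left (T.le_opNorm _) (norm_nonneg _)
      _ = ‖T‖ * ‖C (e b)‖ ^ 2 := by ring
  -- the ℝ≥0∞ bookkeeping
  have hA : ∀ i, (∑' a, ENNReal.ofReal (u i a))
      = ∑' b, ENNReal.ofReal (‖(B i) (C (e b))‖ ^ 2) := by
    intro i
    have h := aux_swap e (C.comp (ContinuousLinearMap.adjoint (B i)))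
    rw [ContinuousLinearMap.adjoint_comp, hCadj, ContinuousLinearMap.adjoint_adjoint] at h
    simpa [hu, ContinuousLinearMap.comp_apply] using h
  have hB : ∀ b, (∑' i, ENNReal.ofReal (‖(B i) (C (e b))‖ ^ 2)) = ENNReal.ofReal (W b) := by
    intro b
    rw [← ENNReal.ofReal_tsum_of_nonneg (fun i => sq_nonneg _) (hW b).summable, (hW b).tsum_eq]
  have hSig : (∑' i, ∑' a, ENNReal.ofReal (u i a)) = ENNReal.ofReal (∑' b, W b) := by
    calc ∑' i, ∑' a, ENNReal.ofReal (u i a)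
        = ∑' i, ∑' b, ENNReal.ofReal (‖(B i) (C (e b))‖ ^ 2) := tsum_congr hA
      _ = ∑' b, ∑' i, ENNReal.ofReal (‖(B i) (C (e b))‖ ^ 2) := ENNReal.tsum_comm
      _ = ∑' b, ENNReal.ofReal (W b) := tsum_congr hB
      _ = ENNReal.ofReal (∑' b, W b) := (ENNReal.ofReal_tsum_of_nonneg hW0 hWsum).symm
  have hfin : (∑' i, ∑' a, ENNReal.ofReal (u i a)) ≠ ⊤ := by
    rw [hSig]; exact ENNReal.ofReal_ne_top
  -- summability of each u i
  have hui : ∀ i, Summable (u i) := by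
    intro i
    have hi : (∑' a, ENNReal.ofReal (u i a)) ≠ ⊤ :=
      ne_top_of_le_ne_top hfin (ENNReal.le_tsum i)
    have := ENNReal.summable_toReal hi
    exact this.congr fun a => ENNReal.toReal_ofReal (sq_nonneg _)
  -- claim 1
  have claim1 : ∀ i, Summable (fun a =>
      (⟪e a, (B i) (ρ ((ContinuousLinearMap.adjoint (B i)) (e a)))⟫ : ℂ)) := by
    intro i
    exact (((hui i).hasSum.mapL Complex.ofRealCLM).summable).congr fun a => (hgeq i a).symm
  have htsum_g : ∀ i, (∑' a, (⟪e a, (B i) (ρ ((ContinuousLinearMap.adjoint (B i)) (e a)))⟫ : ℂ))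
      = ((∑' a, u i a : ℝ) : ℂ) := by
    intro i
    have h := ((hui i).hasSum.mapL Complex.ofRealCLM).tsum_eq
    rw [tsum_congr (fun a => hgeq i a)]
    simpa using h
  -- summability of the row sums
  have hti : Summable (fun i => ∑' a, u i a) := by
    have h1 : (∑' i, ENNReal.ofReal (∑' a, u i a)) ≠ ⊤ := by
      have : ∀ i, ENNReal.ofReal (∑' a, u i a) = ∑' a, ENNReal.ofReal (u i a) :=
        fun i => ENNReal.ofReal_tsum_of_nonneg (fun a => sq_nonneg _) (hui i)
      rw [tsum_congr this]; exact hfin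
    have := ENNReal.summable_toReal h1
    exact this.congr fun i => ENNReal.toReal_ofReal (tsum_nonneg fun a => sq_nonneg _)
  have claim2 : Summable (fun i => ∑' a,
      (⟪e a, (B i) (ρ ((ContinuousLinearMap.adjoint (B i)) (e a)))⟫ : ℂ)) :=
    ((hti.hasSum.mapL Complex.ofRealCLM).summable).congr fun i => (htsum_g i).symm
  -- total sums agree (real level)
  have hreal : (∑' i, ∑' a, u i a) = ∑' b, W b := by
    rw [← ENNReal.ofReal_eq_ofReal_iff (tsum_nonneg fun i => tsum_nonneg fun a => sq_nonneg _)
      (tsum_nonneg fun b => hW0 b)]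
    rw [ENNReal.ofReal_tsum_of_nonneg (fun i => tsum_nonneg fun a => sq_nonneg _) hti]
    rw [tsum_congr (fun i => ENNReal.ofReal_tsum_of_nonneg (fun a => sq_nonneg _) (hui i))]
    exact hSig
  -- Hilbert–Schmidt hypotheses for cyclicity
  have hSsum : Summable (fun a => ‖(C.comp T) (e a)‖ ^ 2) := by
    have hswap := aux_swap e (C.comp T)
    rw [ContinuousLinearMap.adjoint_comp, hCadj] at hswap
    have hbd : (∑' a, ENNReal.ofReal (‖((ContinuousLinearMap.adjoint T).comp C) (e a)‖ ^ 2))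
        ≤ ∑' a, ENNReal.ofReal (‖ContinuousLinearMap.adjoint T‖ ^ 2 * ‖C (e a)‖ ^ 2) := by
      refine ENNReal.tsum_le_tsum fun a => ENNReal.ofReal_le_ofReal ?_
      have h1 : ‖((ContinuousLinearMap.adjoint T).comp C) (e a)‖
          ≤ ‖ContinuousLinearMap.adjoint T‖ * ‖C (e a)‖ :=
        (ContinuousLinearMap.adjoint T).le_opNorm _
      calc ‖((ContinuousLinearMap.adjoint T).comp C) (e a)‖ ^ 2
          ≤ (‖ContinuousLinearMap.adjoint T‖ * ‖C (e a)‖) ^ 2 := by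
            exact pow_le_pow_left₀ (norm_nonneg _) h1 2
        _ = ‖ContinuousLinearMap.adjoint T‖ ^ 2 * ‖C (e a)‖ ^ 2 := by ring
    have hfin2 : (∑' a, ENNReal.ofReal (‖(C.comp T) (e a)‖ ^ 2)) ≠ ⊤ := by
      rw [hswap]
      refine ne_top_of_le_ne_top ?_ hbd
      rw [← ENNReal.ofReal_tsum_of_nonneg (fun a => by positivity)
        (hCsq.mul_left (‖ContinuousLinearMap.adjoint T‖ ^ 2))]
      exact ENNReal.ofReal_ne_top
    have := ENNReal.summable_toReal hfin2
    exact this.congr fun a => ENNReal.toReal_ofReal (sq_nonneg _)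
  -- cyclicity
  have hcyc := aux_cyc e (C.comp T) C hSsum hCsq
  -- final computation
  refine ⟨claim1, claim2, ?_⟩
  calc ∑' i, ∑' a, (⟪e a, (B i) (ρ ((ContinuousLinearMap.adjoint (B i)) (e a)))⟫ : ℂ)
      = ∑' i, ((∑' a, u i a : ℝ) : ℂ) := tsum_congr htsum_g
    _ = ((∑' i, ∑' a, u i a : ℝ) : ℂ) := by
        simpa using (hti.hasSum.mapL Complex.ofRealCLM).tsum_eq
    _ = ((∑' b, W b : ℝ) : ℂ) := by rw [hreal]
    _ = ∑' b, ((W b : ℝ) : ℂ) := by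
        simpa using (hWsum.hasSum.mapL Complex.ofRealCLM).tsum_eq.symm
    _ = ∑' b, (⟪e b, (C.comp T) (C (e b))⟫ : ℂ) := by
        refine tsum_congr fun b => ?_
        rw [← (hstr (C (e b))).2, hCswap]
        rfl
    _ = ∑' a, (⟪e a, C ((C.comp T) (e a))⟫ : ℂ) := hcyc
    _ = ∑' a, (⟪e a, ρ (T (e a))⟫ : ℂ) := by
        refine tsum_congr fun a => ?_
        congr 1
        exact hCC (T (e a))

end main
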